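/- Let I and J be strongly stable monomial ideals with the same Hilbert function and m_{≤i}(J_j) ≤ m_{≤i}(I_j) for all i, j. If β₁(R/I) = β₁(R/J) (equal total number of minimal generators), then m_{≤i}(I_j) = m_{≤i}(J_j) for all i and j. -/

import Mathlib

/-- The exponent vector of the monomial `x_j · u / x_i` (exchange move). -/
def exch {n : ℕ} (u : Fin n → ℕ) (i j : Fin n) : Fin n → ℕ :=
  fun k => if k = i then u i - 1 else if k = j then u j + 1 else u k

/-- `maxIdx u` is the largest (1-based) index of a variable dividing the monomial `u`
(`0` for the constant monomial). -/
def maxIdx {n : ℕ} (u : Fin n → ℕ) : ℕ :=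
  (Finset.univ.filter fun i => 0 < u i).sup fun i : Fin n => (i : ℕ) + 1

lemma maxIdx_le_iff {n : ℕ} (u : Fin n → ℕ) (i : ℕ) :
    maxIdx u ≤ i ↔ ∀ m : Fin n, 0 < u m → (m : ℕ) + 1 ≤ i := by
  simp [maxIdx, Finset.sup_le_iff]

lemma maxIdx_le_n {n : ℕ} (u : Fin n → ℕ) : maxIdx u ≤ n := by
  rw [maxIdx_le_iff]; exact fun m _ => m.isLt

lemma maxIdx_add_single {n : ℕ} (v : Fin n → ℕ) (j : Fin n)
    (h : maxIdx v ≤ (j : ℕ) + 1) : maxIdx (v + Pi.single j 1) = (j : ℕ) + 1 := by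
  apply le_antisymm
  · rw [maxIdx_le_iff]
    intro m hm
    rcases eq_or_ne m j with rfl | hne
    · rfl
    · have : 0 < v m := by simpa [Pi.single_apply, hne] using hm
      exact (maxIdx_le_iff v _).mp h m this
  · apply Finset.le_sup (f := fun i : Fin n => (i : ℕ) + 1)
    simp [Pi.single_apply]

lemma sum_add_single {n : ℕ} (v : Fin n → ℕ) (j : Fin n) :
    ∑ i : Fin n, (v + Pi.single j 1 : Fin n → ℕ) i = (∑ i : Fin n, v i) + 1 := by
  simp only [Pi.add_apply]
  rw [Finset.sum_add_distrib, Finset.sum_pi_single']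
  simp

attribute [local instance] Classical.propDecidable

lemma count_nongen {n : ℕ} (S : Set (Fin n → ℕ))
    (hSideal : ∀ a ∈ S, ∀ b : Fin n → ℕ, a + b ∈ S)
    (hSss : ∀ a ∈ S, ∀ i j : Fin n, j < i → 0 < a i → exch a i j ∈ S)
    (Ideg : ℕ → Finset (Fin n → ℕ))
    (hIdeg : ∀ j : ℕ, (↑(Ideg j) : Set (Fin n → ℕ)) = {a ∈ S | ∑ i, a i = j})
    (t : ℕ) :
    ((Ideg (t+1)).filter fun u => ∃ b ∈ S, ∃ j : Fin n, u = b + Pi.single j 1).card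
      = ∑ j : Fin n, ((Ideg t).filter fun u => maxIdx u ≤ (j : ℕ) + 1).card := by
  have hmem : ∀ d : ℕ, ∀ a : Fin n → ℕ, a ∈ Ideg d ↔ a ∈ S ∧ ∑ i, a i = d := by
    intro d a
    rw [← Finset.mem_coe, hIdeg d]
    exact Iff.rfl
  rw [← Finset.card_sigma]
  symm
  apply Finset.card_bij
    (fun (p : (_ : Fin n) × (Fin n → ℕ)) _ => p.2 + Pi.single p.1 1)
  -- maps into
  case hi =>
    rintro ⟨j, v⟩ hp
    simp only [Finset.mem_sigma, Finset.mem_filter, Finset.mem_univ, true_and] at hp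
    obtain ⟨hv, hle⟩ := hp
    rw [hmem] at hv
    rw [Finset.mem_filter, hmem]
    refine ⟨⟨hSideal v hv.1 _, ?_⟩, v, hv.1, j, rfl⟩
    have h1 : ∑ i : Fin n, (v + Pi.single j 1 : Fin n → ℕ) i = t + 1 := by
      rw [sum_add_single, hv.2]
    exact h1
  case i_inj =>
    rintro ⟨j, v⟩ hp ⟨j', v'⟩ hp' heq
    simp only [Finset.mem_sigma, Finset.mem_filter, Finset.mem_univ, true_and] at hp hp'
    have h1 : maxIdx (v + Pi.single j 1) = (j : ℕ) + 1 := maxIdx_add_single v j hp.2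
    have h2 : maxIdx (v' + Pi.single j' 1) = (j' : ℕ) + 1 := maxIdx_add_single v' j' hp'.2
    have hj : j = j' := by
      have := h1 ▸ h2 ▸ congrArg maxIdx heq
      exact Fin.ext (by omega)
    subst hj
    have hv : v = v' := by
      funext m
      have := congrFun heq m
      simp only [Pi.add_apply] at this
      omega
    simp [hv]
  case i_surj =>
    intro u hu
    simp only [Finset.mem_filter] at hu
    obtain ⟨hu1, b, hb, j, hbj⟩ := hu
    rw [hmem] at hu1
    obtain ⟨huS, husum⟩ := hu1
    -- find the max index m of u
    have hne : (Finset.univ.filter fun i => 0 < u i).Nonempty := by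
      by_contra h
      rw [Finset.not_nonempty_iff_eq_empty, Finset.filter_eq_empty_iff] at h
      have : ∑ i, u i = 0 := Finset.sum_eq_zero fun i _ => by
        have := h (Finset.mem_univ i); omega
      omega
    obtain ⟨m, hm, hmax⟩ := Finset.exists_max_image _ (fun i : Fin n => (i : ℕ)) hne
    rw [Finset.mem_filter] at hm
    have hum : 0 < u m := hm.2
    set v : Fin n → ℕ := fun i => if i = m then u i - 1 else u i with hvdef
    have huv : u = v + Pi.single m 1 := by
      funext i
      simp only [Pi.add_apply, hvdef, Pi.single_apply]
      rcases eq_or_ne i m with rfl | hne'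
      · simp; omega
      · simp [hne']
    have hvS : v ∈ S := by
      rcases eq_or_ne j m with rfl | hjm
      · have hvb : v = b := by
          funext i
          have hbji := congrFun hbj i
          simp only [Pi.add_apply, Pi.single_apply] at hbji
          simp only [hvdef]
          rcases eq_or_ne i j with h | h <;> simp [h] at hbji ⊢ <;> omega
        exact hvb ▸ hb
      · have huj : 0 < u j := by
          have h2 := congrFun hbj j
          simp [Pi.single_apply] at h2
          omega
        have hlej : (j : ℕ) ≤ (m : ℕ) :=
          hmax j (Finset.mem_filter.mpr ⟨Finset.mem_univ j, huj⟩)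
        have hjlt : j < m := by
          rw [Fin.lt_def]
          rcases lt_or_eq_of_le hlej with h | h
          · exact h
          · exact absurd (Fin.ext h) hjm
        have hbm : 0 < b m := by
          have h2 := congrFun hbj m
          simp [Pi.single_apply, Ne.symm hjm] at h2
          omega
        have hx := hSss b hb m j hjlt hbm
        have hev : exch b m j = v := by
          funext i
          have hbji := congrFun hbj i
          simp only [Pi.add_apply, Pi.single_apply] at hbji
          simp only [exch, hvdef]
          rcases eq_or_ne i m with h | him
          · simp [h, hjm, Ne.symm hjm] at hbji ⊢ <;> omega
          · rcases eq_or_ne i j with h | hij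
            · simp [h, him, hjm] at hbji ⊢ <;> omega
            · simp [him, hij, hjm] at hbji ⊢ <;> omega
        exact hev ▸ hx
    refine ⟨⟨m, v⟩, ?_, huv.symm⟩
    simp only [Finset.mem_sigma, Finset.mem_univ, true_and, Finset.mem_filter]
    refine ⟨?_, ?_⟩
    · rw [hmem]
      refine ⟨hvS, ?_⟩
      have hsum : ∑ i, u i = (∑ i, v i) + 1 := by
        rw [huv, sum_add_single]
      omega
    · rw [maxIdx_le_iff]
      intro i hi
      have hui : 0 < u i := by
        simp only [hvdef] at hi
        rcases eq_or_ne i m with rfl | h'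
        · exact hum
        · simpa [h'] using hi
      exact Nat.succ_le_succ (hmax i (Finset.mem_filter.mpr ⟨Finset.mem_univ i, hui⟩))

lemma gen_count {n k : ℕ} (S : Set (Fin n → ℕ))
    (hSproper : (0 : Fin n → ℕ) ∉ S)
    (hSideal : ∀ a ∈ S, ∀ b : Fin n → ℕ, a + b ∈ S)
    (hSss : ∀ a ∈ S, ∀ i j : Fin n, j < i → 0 < a i → exch a i j ∈ S)
    (hSgen : ∀ a ∈ S, k < ∑ i, a i → ∃ b ∈ S, ∃ j : Fin n, a = b + Pi.single j 1)
    (Ideg : ℕ → Finset (Fin n → ℕ))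
    (hIdeg : ∀ j : ℕ, (↑(Ideg j) : Set (Fin n → ℕ)) = {a ∈ S | ∑ i, a i = j})
    (GI : Finset (Fin n → ℕ))
    (hGI : (↑GI : Set (Fin n → ℕ)) =
      {a ∈ S | ¬∃ b ∈ S, ∃ j : Fin n, a = b + Pi.single j 1})
    (K : ℕ) (hK : k ≤ K) :
    GI.card + ∑ t ∈ Finset.range K, ∑ j : Fin n,
        ((Ideg t).filter fun u => maxIdx u ≤ (j : ℕ) + 1).card
      = ∑ t ∈ Finset.range (K+1), (Ideg t).card := by
  have hmem : ∀ d : ℕ, ∀ a : Fin n → ℕ, a ∈ Ideg d ↔ a ∈ S ∧ ∑ i, a i = d := by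
    intro d a
    rw [← Finset.mem_coe, hIdeg d]
    exact Iff.rfl
  have hGmem : ∀ a : Fin n → ℕ, a ∈ GI ↔
      a ∈ S ∧ ¬∃ b ∈ S, ∃ j : Fin n, a = b + Pi.single j 1 := by
    intro a
    rw [← Finset.mem_coe, hGI]
    exact Iff.rfl
  -- GI as a disjoint union of degree pieces
  have hGIeq : GI = (Finset.range (K+1)).biUnion
      (fun t => (Ideg t).filter fun u => ¬∃ b ∈ S, ∃ j : Fin n, u = b + Pi.single j 1) := by
    ext a
    simp only [Finset.mem_biUnion, Finset.mem_range, Finset.mem_filter, hGmem, hmem]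
    constructor
    · rintro ⟨haS, hng⟩
      refine ⟨∑ i, a i, ?_, ⟨haS, rfl⟩, hng⟩
      by_contra h
      exact hng (hSgen a haS (by omega))
    · rintro ⟨t, _, ⟨haS, _⟩, hng⟩
      exact ⟨haS, hng⟩
  have hGIcard : GI.card = ∑ t ∈ Finset.range (K+1),
      ((Ideg t).filter fun u => ¬∃ b ∈ S, ∃ j : Fin n, u = b + Pi.single j 1).card := by
    rw [hGIeq]
    apply Finset.card_biUnion
    intro t1 _ t2 _ hne
    simp only [Function.onFun]
    rw [Finset.disjoint_left]
    intro a ha1 ha2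
    rw [Finset.mem_filter, hmem] at ha1 ha2
    exact hne (ha1.1.2 ▸ ha2.1.2)
  have hsplit : ∀ t : ℕ, (Ideg t).card =
      ((Ideg t).filter fun u => ¬∃ b ∈ S, ∃ j : Fin n, u = b + Pi.single j 1).card
      + ((Ideg t).filter fun u => ∃ b ∈ S, ∃ j : Fin n, u = b + Pi.single j 1).card := by
    intro t
    rw [add_comm]
    exact (Finset.card_filter_add_card_filter_not _).symm
  have hI0 : Ideg 0 = ∅ := by
    rw [Finset.eq_empty_iff_forall_notMem]
    intro a ha
    rw [hmem] at ha
    have : a = 0 := by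
      funext i
      have := Finset.sum_eq_zero_iff.mp ha.2 i (Finset.mem_univ i)
      simpa using this
    exact hSproper (this ▸ ha.1)
  calc GI.card + ∑ t ∈ Finset.range K, ∑ j : Fin n,
        ((Ideg t).filter fun u => maxIdx u ≤ (j : ℕ) + 1).card
      = GI.card + ∑ t ∈ Finset.range K,
        ((Ideg (t+1)).filter fun u => ∃ b ∈ S, ∃ j : Fin n, u = b + Pi.single j 1).card := by
        congr 1
        exact Finset.sum_congr rfl fun t _ => (count_nongen S hSideal hSss Ideg hIdeg t).symm
    _ = GI.card + ∑ t ∈ Finset.range (K+1),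
        ((Ideg t).filter fun u => ∃ b ∈ S, ∃ j : Fin n, u = b + Pi.single j 1).card := by
        rw [Finset.sum_range_succ']
        simp [hI0]
    _ = ∑ t ∈ Finset.range (K+1), (Ideg t).card := by
        rw [hGIcard, ← Finset.sum_add_distrib]
        exact Finset.sum_congr rfl fun t _ => (hsplit t).symm

/-- If `I`, `J` are (proper) strongly stable monomial ideals with the same Hilbert
function, generated in degrees `≤ k`, with `m_{≤i}(J_j) ≤ m_{≤i}(I_j)` for all `i, j`,
and `I` and `J` have the same number of minimal generators (`β₁(R/I) = β₁(R/J)`),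
then `m_{≤i}(I_j) = m_{≤i}(J_j)` for all `i, j`. -/
theorem mle_eq_of_card_generators_eq (n k : ℕ) (S T : Set (Fin n → ℕ))
    (hSproper : (0 : Fin n → ℕ) ∉ S) (hTproper : (0 : Fin n → ℕ) ∉ T)
    (hSideal : ∀ a ∈ S, ∀ b : Fin n → ℕ, a + b ∈ S)
    (hTideal : ∀ a ∈ T, ∀ b : Fin n → ℕ, a + b ∈ T)
    (hSss : ∀ a ∈ S, ∀ i j : Fin n, j < i → 0 < a i → exch a i j ∈ S)
    (hTss : ∀ a ∈ T, ∀ i j : Fin n, j < i → 0 < a i → exch a i j ∈ T)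
    (hSgen : ∀ a ∈ S, k < ∑ i, a i → ∃ b ∈ S, ∃ j : Fin n, a = b + Pi.single j 1)
    (hTgen : ∀ a ∈ T, k < ∑ i, a i → ∃ b ∈ T, ∃ j : Fin n, a = b + Pi.single j 1)
    (Ideg Jdeg : ℕ → Finset (Fin n → ℕ))
    (hIdeg : ∀ j : ℕ, (↑(Ideg j) : Set (Fin n → ℕ)) = {a ∈ S | ∑ i, a i = j})
    (hJdeg : ∀ j : ℕ, (↑(Jdeg j) : Set (Fin n → ℕ)) = {a ∈ T | ∑ i, a i = j})
    (hHilb : ∀ j : ℕ, (Ideg j).card = (Jdeg j).card)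
    (hmle : ∀ i j : ℕ, ((Jdeg j).filter fun u => maxIdx u ≤ i).card
      ≤ ((Ideg j).filter fun u => maxIdx u ≤ i).card)
    (GI GJ : Finset (Fin n → ℕ))
    (hGI : (↑GI : Set (Fin n → ℕ)) =
      {a ∈ S | ¬∃ b ∈ S, ∃ j : Fin n, a = b + Pi.single j 1})
    (hGJ : (↑GJ : Set (Fin n → ℕ)) =
      {a ∈ T | ¬∃ b ∈ T, ∃ j : Fin n, a = b + Pi.single j 1})
    (hbeta1 : GI.card = GJ.card) :
    ∀ i j : ℕ, ((Ideg j).filter fun u => maxIdx u ≤ i).card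
      = ((Jdeg j).filter fun u => maxIdx u ≤ i).card := by
  intro i j
  set K := max k j + 1 with hKdef
  have hkK : k ≤ K := by omega
  have hI := gen_count S hSproper hSideal hSss hSgen Ideg hIdeg GI hGI K hkK
  have hJ := gen_count T hTproper hTideal hTss hTgen Jdeg hJdeg GJ hGJ K hkK
  have hH : ∑ t ∈ Finset.range (K+1), (Ideg t).card
      = ∑ t ∈ Finset.range (K+1), (Jdeg t).card :=
    Finset.sum_congr rfl fun t _ => hHilb t
  have hsums : ∑ t ∈ Finset.range K, ∑ j' : Fin n,
        ((Jdeg t).filter fun u => maxIdx u ≤ (j' : ℕ) + 1).card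
      = ∑ t ∈ Finset.range K, ∑ j' : Fin n,
        ((Ideg t).filter fun u => maxIdx u ≤ (j' : ℕ) + 1).card := by
    omega
  have hterm : ∀ t ∈ Finset.range K, (∑ j' : Fin n,
        ((Jdeg t).filter fun u => maxIdx u ≤ (j' : ℕ) + 1).card)
      = ∑ j' : Fin n, ((Ideg t).filter fun u => maxIdx u ≤ (j' : ℕ) + 1).card := by
    rw [← Finset.sum_eq_sum_iff_of_le]
    · exact hsums
    · intro t _
      exact Finset.sum_le_sum fun j' _ => hmle ((j' : ℕ) + 1) t
  have hjrange : j ∈ Finset.range K := Finset.mem_range.mpr (by omega)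
  have hfine : ∀ j' : Fin n,
      ((Jdeg j).filter fun u => maxIdx u ≤ (j' : ℕ) + 1).card
      = ((Ideg j).filter fun u => maxIdx u ≤ (j' : ℕ) + 1).card := by
    have h2 := (Finset.sum_eq_sum_iff_of_le
      (fun (j' : Fin n) _ => hmle ((j' : ℕ) + 1) j)).mp (hterm j hjrange)
    exact fun j' => h2 j' (Finset.mem_univ j')
  -- now conclude for arbitrary i
  have hmemI : ∀ d : ℕ, ∀ a : Fin n → ℕ, a ∈ Ideg d ↔ a ∈ S ∧ ∑ i, a i = d := by
    intro d a
    rw [← Finset.mem_coe, hIdeg d]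
    exact Iff.rfl
  have hmemJ : ∀ d : ℕ, ∀ a : Fin n → ℕ, a ∈ Jdeg d ↔ a ∈ T ∧ ∑ i, a i = d := by
    intro d a
    rw [← Finset.mem_coe, hJdeg d]
    exact Iff.rfl
  rcases Nat.eq_zero_or_pos i with rfl | hipos
  · -- i = 0 : both sides are empty
    have hempty : ∀ (W : Set (Fin n → ℕ)) (hW : (0 : Fin n → ℕ) ∉ W)
        (D : Finset (Fin n → ℕ)) (hD : ∀ a : Fin n → ℕ, a ∈ D ↔ a ∈ W ∧ ∑ i, a i = j),
        (D.filter fun u => maxIdx u ≤ 0) = ∅ := by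
      intro W hW D hD
      rw [Finset.eq_empty_iff_forall_notMem]
      intro a ha
      rw [Finset.mem_filter, hD] at ha
      have ha0 : a = 0 := by
        funext m
        simp only [Pi.zero_apply]
        have := (maxIdx_le_iff a 0).mp ha.2 m
        by_contra h
        have := this (by omega)
        omega
      exact hW (ha0 ▸ ha.1.1)
    rw [hempty S hSproper (Ideg j) (hmemI j), hempty T hTproper (Jdeg j) (hmemJ j)]
  rcases le_or_gt i n with hin | hni
  · -- 1 ≤ i ≤ n : use hfine at j' = i - 1
    have := hfine ⟨i - 1, by omega⟩
    simp only at this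
    have hii : (i - 1) + 1 = i := by omega
    rw [hii] at this
    exact this.symm
  · -- i > n : the filters are everything
    have hfull : ∀ (D : Finset (Fin n → ℕ)),
        (D.filter fun u => maxIdx u ≤ i) = D := by
      intro D
      apply Finset.filter_true_of_mem
      intro u _
      exact le_trans (maxIdx_le_n u) (by omega)
    rw [hfull, hfull]
    exact hHilb j
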